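/- arXiv:2301.00040 — 2 statements merged into one kernel-verified Lean document; each statement's English description precedes it below -/
import Mathlib

section
/- Three-variable identity: let H be a real Hilbert space, Z a complete subspace, and y, x, w ∈ H with y^{⊥Z}, x^{⊥Z}, w^{⊥Z} nonzero, y^{⊥span(x)+span(w)+Z} ≠ 0, x^{⊥span(w)+Z} ≠ 0, and w^{⊥span(x)+Z} ≠ 0. Then f_{y∼x|span(w)+Z}·√(1 − R²_{y∼w|span(x)+Z}) = f_{y∼x|Z}·√(1 − R²_{x∼w|Z}) − R_{y∼w|span(x)+Z}·R_{x∼w|Z}. -/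
set_option maxHeartbeats 1000000


/-!
R²-calculus in real Hilbert spaces (Freidling & Zhao, "Optimization-based
Sensitivity Analysis for Unmeasured Confounding using Partial Correlations").
-/

noncomputable section

open Submodule RealInnerProductSpace

variable {H : Type*} [NormedAddCommGroup H] [InnerProductSpace ℝ H]

/-- The residual `h^{⊥M} = h − P_M h` of `h` after projecting onto `M`. -/
def resid (M : Submodule ℝ H) [HasOrthogonalProjection M] (h : H) : H :=
  h - (orthogonalProjection M h : H)

/-- The marginal R²-value `R²_{y∼X} = 1 − ‖y^{⊥X}‖²/‖y‖²`. -/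
def R2 (y : H) (X : Submodule ℝ H) [HasOrthogonalProjection X] : ℝ :=
  1 - ‖resid X y‖ ^ 2 / ‖y‖ ^ 2

/-- The partial R²-value `R²_{y∼X|Z} = (R²_{y∼X+Z} − R²_{y∼Z})/(1 − R²_{y∼Z})`. -/
def R2p (y : H) (X Z : Submodule ℝ H) [HasOrthogonalProjection (X ⊔ Z)]
    [HasOrthogonalProjection Z] : ℝ :=
  (R2 y (X ⊔ Z) - R2 y Z) / (1 - R2 y Z)

/-- The partial R-value `R_{y∼x|Z} = ⟪y^{⊥Z}, x^{⊥Z}⟫/(‖y^{⊥Z}‖·‖x^{⊥Z}‖)`. -/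
def Rp (y x : H) (Z : Submodule ℝ H) [HasOrthogonalProjection Z] : ℝ :=
  ⟪resid Z y, resid Z x⟫ / (‖resid Z y‖ * ‖resid Z x‖)

/-- The partial f-value `f_{y∼x|Z} = R_{y∼x|Z}/√(1 − R²_{y∼x|Z})`. -/
def fp (y x : H) (Z : Submodule ℝ H) [HasOrthogonalProjection Z] : ℝ :=
  Rp y x Z / Real.sqrt (1 - Rp y x Z ^ 2)

/-- The regression estimand `β_{y∼d|M} = ⟪y^{⊥M}, d^{⊥M}⟫/‖d^{⊥M}‖²`. -/
def betaReg (y d : H) (M : Submodule ℝ H) [HasOrthogonalProjection M] : ℝ :=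
  ⟪resid M y, resid M d⟫ / ‖resid M d‖ ^ 2

/-- `σ_{y∼M} = ‖y^{⊥M}‖`. -/
def sigv (y : H) (M : Submodule ℝ H) [HasOrthogonalProjection M] : ℝ :=
  ‖resid M y‖

/-! ### Auxiliary scalar lemmas -/

lemma core_alg' (a b c : ℝ) (ha : a^2 < 1) (hc : c^2 < 1)
    (hb : b^2 < 1)
    (hD : 0 < 1 - a^2 - b^2 - c^2 + 2*(a*b*c)) :
    ((a-b*c)/(Real.sqrt (1-b^2)*Real.sqrt (1-c^2))) /
      Real.sqrt (1 - ((a-b*c)/(Real.sqrt (1-b^2)*Real.sqrt (1-c^2)))^2) *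
      Real.sqrt (1 - ((b-a*c)/(Real.sqrt (1-a^2)*Real.sqrt (1-c^2)))^2)
    = a/Real.sqrt (1-a^2) * Real.sqrt (1-c^2) -
      ((b-a*c)/(Real.sqrt (1-a^2)*Real.sqrt (1-c^2)))*c := by
  set sA := Real.sqrt (1-a^2) with hsAdef
  set sB := Real.sqrt (1-b^2) with hsBdef
  set sC := Real.sqrt (1-c^2) with hsCdef
  set sD := Real.sqrt (1 - a^2 - b^2 - c^2 + 2*(a*b*c)) with hsDdef
  have hA2 : sA^2 = 1-a^2 := Real.sq_sqrt (by linarith)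
  have hB2 : sB^2 = 1-b^2 := Real.sq_sqrt (by linarith)
  have hC2 : sC^2 = 1-c^2 := Real.sq_sqrt (by linarith)
  have hD2 : sD^2 = 1 - a^2 - b^2 - c^2 + 2*(a*b*c) := Real.sq_sqrt (by linarith)
  have hA0 : 0 < sA := Real.sqrt_pos.2 (by linarith)
  have hB0 : 0 < sB := Real.sqrt_pos.2 (by linarith)
  have hC0 : 0 < sC := Real.sqrt_pos.2 (by linarith)
  have hD0 : 0 < sD := Real.sqrt_pos.2 (by linarith)
  have hBC : (sB*sC)^2 = (1-b^2)*(1-c^2) := by rw [mul_pow, hB2, hC2]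
  have hAC : (sA*sC)^2 = (1-a^2)*(1-c^2) := by rw [mul_pow, hA2, hC2]
  have hBC0 : (0:ℝ) < (1-b^2)*(1-c^2) := by nlinarith
  have hAC0 : (0:ℝ) < (1-a^2)*(1-c^2) := by nlinarith
  have e1 : 1 - ((a-b*c)/(sB*sC))^2 = (sD/(sB*sC))^2 := by
    rw [div_pow, div_pow, hD2, hBC, one_sub_div hBC0.ne']
    congr 1; ring
  have e2 : 1 - ((b-a*c)/(sA*sC))^2 = (sD/(sA*sC))^2 := by
    rw [div_pow, div_pow, hD2, hAC, one_sub_div hAC0.ne']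
    congr 1; ring
  rw [e1, e2, Real.sqrt_sq (by positivity), Real.sqrt_sq (by positivity)]
  have h1 : ((a-b*c)/(sB*sC)) / (sD/(sB*sC)) = (a-b*c)/sD := by
    field_simp
  have h2 : (a-b*c)/sD * (sD/(sA*sC)) = (a-b*c)/(sA*sC) := by
    field_simp
  have h3 : a / sA * sC - (b - a*c)/(sA*sC)*c = (a*sC^2 - (b-a*c)*c)/(sA*sC) := by
    field_simp
  rw [h1, h2, h3, hC2, show a*(1-c^2) - (b-a*c)*c = a - b*c from by ring]

lemma Dpos' (a b c : ℝ) (h : (a-b*c)^2 < (1-b^2)*(1-c^2)) :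
    0 < 1 - a^2 - b^2 - c^2 + 2*(a*b*c) := by nlinarith [h]

lemma master_alg' (p q r ny nx nw : ℝ)
    (hny : 0 < ny) (hnx : 0 < nx) (hnw : 0 < nw)
    (h1 : p^2 < ny^2*nx^2) (h2 : r^2 < nx^2*nw^2) (h4 : q^2 < ny^2*nw^2)
    (h3 : (p - q*r/nw^2)^2 < (ny^2 - q^2/nw^2)*(nx^2 - r^2/nw^2)) :
    ((p - q*r/nw^2) / (Real.sqrt (ny^2 - q^2/nw^2) * Real.sqrt (nx^2 - r^2/nw^2))) /
      Real.sqrt (1 - ((p - q*r/nw^2) / (Real.sqrt (ny^2 - q^2/nw^2) * Real.sqrt (nx^2 - r^2/nw^2)))^2) *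
      Real.sqrt (1 - ((q - p*r/nx^2) / (Real.sqrt (ny^2 - p^2/nx^2) * Real.sqrt (nw^2 - r^2/nx^2)))^2)
    = (p/(ny*nx))/Real.sqrt (1 - (p/(ny*nx))^2) * Real.sqrt (1 - (r/(nx*nw))^2) -
      ((q - p*r/nx^2) / (Real.sqrt (ny^2 - p^2/nx^2) * Real.sqrt (nw^2 - r^2/nx^2)))*(r/(nx*nw)) := by
  set a := p/(ny*nx) with hadef
  set b := q/(ny*nw) with hbdef
  set c := r/(nx*nw) with hcdef
  have hp : p = a*(ny*nx) := by rw [hadef]; field_simp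
  have hq : q = b*(ny*nw) := by rw [hbdef]; field_simp
  have hr : r = c*(nx*nw) := by rw [hcdef]; field_simp
  clear_value a b c
  have ha : a^2 < 1 := by
    rw [hp, mul_pow, show ny^2*nx^2 = 1*(ny*nx)^2 from by ring] at h1
    exact lt_of_mul_lt_mul_right h1 (by positivity)
  have hb : b^2 < 1 := by
    rw [hq, mul_pow, show ny^2*nw^2 = 1*(ny*nw)^2 from by ring] at h4
    exact lt_of_mul_lt_mul_right h4 (by positivity)
  have hc : c^2 < 1 := by
    rw [hr, mul_pow, show nx^2*nw^2 = 1*(nx*nw)^2 from by ring] at h2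
    exact lt_of_mul_lt_mul_right h2 (by positivity)
  have eY : ny^2 - q^2/nw^2 = ny^2*(1-b^2) := by rw [hq]; field_simp
  have eX : nx^2 - r^2/nw^2 = nx^2*(1-c^2) := by rw [hr]; field_simp
  have eY2 : ny^2 - p^2/nx^2 = ny^2*(1-a^2) := by rw [hp]; field_simp
  have eW2 : nw^2 - r^2/nx^2 = nw^2*(1-c^2) := by rw [hr]; field_simp
  have eP : p - q*r/nw^2 = (ny*nx)*(a-b*c) := by rw [hp, hq, hr]; field_simp
  have eQ : q - p*r/nx^2 = (ny*nw)*(b-a*c) := by rw [hp, hq, hr]; field_simp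
  have sY : Real.sqrt (ny^2 - q^2/nw^2) = ny * Real.sqrt (1-b^2) := by
    rw [eY, Real.sqrt_mul (by positivity), Real.sqrt_sq hny.le]
  have sX : Real.sqrt (nx^2 - r^2/nw^2) = nx * Real.sqrt (1-c^2) := by
    rw [eX, Real.sqrt_mul (by positivity), Real.sqrt_sq hnx.le]
  have sY2 : Real.sqrt (ny^2 - p^2/nx^2) = ny * Real.sqrt (1-a^2) := by
    rw [eY2, Real.sqrt_mul (by positivity), Real.sqrt_sq hny.le]
  have sW2 : Real.sqrt (nw^2 - r^2/nx^2) = nw * Real.sqrt (1-c^2) := by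
    rw [eW2, Real.sqrt_mul (by positivity), Real.sqrt_sq hnw.le]
  have hsB0 : (0:ℝ) < Real.sqrt (1-b^2) := Real.sqrt_pos.2 (by linarith)
  have hsC0 : (0:ℝ) < Real.sqrt (1-c^2) := Real.sqrt_pos.2 (by linarith)
  have hsA0 : (0:ℝ) < Real.sqrt (1-a^2) := Real.sqrt_pos.2 (by linarith)
  have eA : (p - q*r/nw^2) / (Real.sqrt (ny^2 - q^2/nw^2) * Real.sqrt (nx^2 - r^2/nw^2)) =
      (a-b*c)/(Real.sqrt (1-b^2)*Real.sqrt (1-c^2)) := by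
    rw [eP, sY, sX, show (ny*Real.sqrt (1-b^2))*(nx*Real.sqrt (1-c^2)) =
      (ny*nx)*(Real.sqrt (1-b^2)*Real.sqrt (1-c^2)) from by ring,
      mul_div_mul_left _ _ (by positivity : (0:ℝ) < ny*nx).ne']
  have eB : (q - p*r/nx^2) / (Real.sqrt (ny^2 - p^2/nx^2) * Real.sqrt (nw^2 - r^2/nx^2)) =
      (b-a*c)/(Real.sqrt (1-a^2)*Real.sqrt (1-c^2)) := by
    rw [eQ, sY2, sW2, show (ny*Real.sqrt (1-a^2))*(nw*Real.sqrt (1-c^2)) =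
      (ny*nw)*(Real.sqrt (1-a^2)*Real.sqrt (1-c^2)) from by ring,
      mul_div_mul_left _ _ (by positivity : (0:ℝ) < ny*nw).ne']
  have h3' : (a-b*c)^2 < (1-b^2)*(1-c^2) := by
    rw [eP, eY, eX, mul_pow] at h3
    rw [show ny^2*(1-b^2)*(nx^2*(1-c^2)) = (ny*nx)^2*((1-b^2)*(1-c^2)) from by ring] at h3
    exact lt_of_mul_lt_mul_left h3 (by positivity)
  have hD : 0 < 1 - a^2 - b^2 - c^2 + 2*(a*b*c) := Dpos' a b c h3'
  rw [eA, eB]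
  exact core_alg' a b c ha hc hb hD

/-! ### Auxiliary Hilbert-space lemmas -/

lemma resid_eq_zero_iff' {M : Submodule ℝ H} [HasOrthogonalProjection M] {h : H} :
    resid M h = 0 ↔ h ∈ M := by
  rw [resid, sub_eq_zero, eq_comm]; exact starProjection_eq_self_iff

lemma resid_ne_zero_of_le' {M M' : Submodule ℝ H} [HasOrthogonalProjection M]
    [HasOrthogonalProjection M'] (hle : M ≤ M') {h : H} (hne : resid M' h ≠ 0) :
    resid M h ≠ 0 :=
  fun h0 => hne (resid_eq_zero_iff'.2 (hle (resid_eq_zero_iff'.1 h0)))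

lemma resid_congr' {M M' : Submodule ℝ H} [HasOrthogonalProjection M]
    [HasOrthogonalProjection M'] (hMM : M = M') (v : H) : resid M v = resid M' v := by
  subst hMM; rfl

lemma resid_sup_span' (Z : Submodule ℝ H) [HasOrthogonalProjection Z] (x : H)
    [HasOrthogonalProjection ((ℝ ∙ x) ⊔ Z)] (hx : resid Z x ≠ 0) (h : H) :
    resid ((ℝ ∙ x) ⊔ Z) h = resid Z h -
      (⟪resid Z h, resid Z x⟫ / ‖resid Z x‖^2) • resid Z x := by
  set X := resid Z x with hX
  set t := ⟪resid Z h, X⟫ / ‖X‖^2 with ht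
  have hX2 : (‖X‖:ℝ)^2 ≠ 0 := pow_ne_zero _ (norm_ne_zero_iff.2 hx)
  have hXo : X ∈ Zᗮ := sub_starProjection_mem_orthogonal x
  have hho : resid Z h ∈ Zᗮ := sub_starProjection_mem_orthogonal h
  have hXmem : X ∈ (ℝ ∙ x) ⊔ Z := by
    have h1 : x ∈ (ℝ ∙ x) ⊔ Z := Submodule.mem_sup_left (Submodule.mem_span_singleton_self x)
    have h2 : (orthogonalProjection Z x : H) ∈ (ℝ ∙ x) ⊔ Z :=
      Submodule.mem_sup_right (SetLike.coe_mem _)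
    exact sub_mem h1 h2
  have hvo : resid Z h - t • X ∈ ((ℝ ∙ x) ⊔ Z)ᗮ := by
    rw [← Submodule.inf_orthogonal]
    refine Submodule.mem_inf.2 ⟨?_, sub_mem hho (Submodule.smul_mem _ _ hXo)⟩
    rw [mem_orthogonal_singleton_iff_inner_right]
    have hxX : x = X + (orthogonalProjection Z x : H) := by rw [hX, resid]; abel
    rw [hxX, inner_add_left, inner_sub_right, inner_sub_right]
    have hz1 : ⟪(orthogonalProjection Z x : H), resid Z h⟫ = 0 :=
      (Submodule.mem_orthogonal Z _).1 hho _ (SetLike.coe_mem _)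
    have hz2 : ⟪(orthogonalProjection Z x : H), t • X⟫ = 0 := by
      rw [real_inner_smul_right]
      rw [(Submodule.mem_orthogonal Z _).1 hXo _ (SetLike.coe_mem _), mul_zero]
    rw [hz1, hz2, real_inner_smul_right, real_inner_self_eq_norm_sq,
      real_inner_comm (resid Z h) X, ht]
    field_simp
    ring
  have key : (orthogonalProjection ((ℝ ∙ x) ⊔ Z) h : H) =
      (orthogonalProjection Z h : H) + t • X := by
    apply eq_starProjection_of_mem_orthogonal
    · exact add_mem (Submodule.mem_sup_right (SetLike.coe_mem _))
        (Submodule.smul_mem _ _ hXmem)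
    · have : h - ((orthogonalProjection Z h : H) + t • X) = resid Z h - t • X := by
        rw [resid]; abel
      rw [this]; exact hvo
  rw [resid, key, resid]; abel

lemma cs_strict' (u v : H) (hv : v ≠ 0) (h : u - (⟪u,v⟫/‖v‖^2) • v ≠ 0) :
    ⟪u,v⟫^2 < ‖u‖^2 * ‖v‖^2 := by
  have hv2 : (0:ℝ) < ‖v‖^2 := pow_pos (norm_pos_iff.2 hv) 2
  have hn : (0:ℝ) < ‖u - (⟪u,v⟫/‖v‖^2) • v‖^2 := pow_pos (norm_pos_iff.2 h) 2
  have expand : ‖u - (⟪u,v⟫/‖v‖^2) • v‖^2 = ‖u‖^2 - ⟪u,v⟫^2/‖v‖^2 := by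
    rw [norm_sub_sq_real, real_inner_smul_right, norm_smul, Real.norm_eq_abs,
      mul_pow, sq_abs]
    field_simp
    ring
  rw [expand] at hn
  have := mul_lt_mul_of_pos_right (by linarith : ⟪u,v⟫^2/‖v‖^2 < ‖u‖^2) hv2
  calc ⟪u,v⟫^2 = ⟪u,v⟫^2/‖v‖^2 * ‖v‖^2 := by field_simp
    _ < ‖u‖^2 * ‖v‖^2 := this

lemma normsq_sub_proj' (u v : H) (hv : v ≠ 0) :
    ‖u - (⟪u,v⟫/‖v‖^2) • v‖^2 = ‖u‖^2 - ⟪u,v⟫^2/‖v‖^2 := by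
  rw [norm_sub_sq_real, real_inner_smul_right, norm_smul, Real.norm_eq_abs,
    mul_pow, sq_abs]
  have : (‖v‖:ℝ)^2 ≠ 0 := pow_ne_zero _ (norm_ne_zero_iff.2 hv)
  field_simp
  ring

lemma norm_sub_proj' (u v : H) (hv : v ≠ 0) :
    ‖u - (⟪u,v⟫/‖v‖^2) • v‖ = Real.sqrt (‖u‖^2 - ⟪u,v⟫^2/‖v‖^2) := by
  rw [← normsq_sub_proj' u v hv, Real.sqrt_sq (norm_nonneg _)]

lemma inner_sub_proj' (u1 u2 v : H) (hv : v ≠ 0) :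
    ⟪u1 - (⟪u1,v⟫/‖v‖^2) • v, u2 - (⟪u2,v⟫/‖v‖^2) • v⟫ =
      ⟪u1,u2⟫ - ⟪u1,v⟫*⟪u2,v⟫/‖v‖^2 := by
  have hv2 : (‖v‖:ℝ)^2 ≠ 0 := pow_ne_zero _ (norm_ne_zero_iff.2 hv)
  simp only [inner_sub_left, inner_sub_right, real_inner_smul_left,
    real_inner_smul_right, real_inner_self_eq_norm_sq]
  rw [real_inner_comm v u2]
  field_simp
  ring

/-- the three-variable identity. -/
theorem three_variable_identity [CompleteSpace H]
    (Z : Submodule ℝ H) [CompleteSpace Z] (y x w : H)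
    [CompleteSpace ↥((ℝ ∙ x) ⊔ Z)] [CompleteSpace ↥((ℝ ∙ w) ⊔ Z)]
    [CompleteSpace ↥((ℝ ∙ x) ⊔ (ℝ ∙ w) ⊔ Z)]
    (hy : resid Z y ≠ 0) (hx : resid Z x ≠ 0) (hw : resid Z w ≠ 0)
    (hy3 : resid ((ℝ ∙ x) ⊔ (ℝ ∙ w) ⊔ Z) y ≠ 0)
    (hx2 : resid ((ℝ ∙ w) ⊔ Z) x ≠ 0) (hw2 : resid ((ℝ ∙ x) ⊔ Z) w ≠ 0) :
    fp y x ((ℝ ∙ w) ⊔ Z) * Real.sqrt (1 - Rp y w ((ℝ ∙ x) ⊔ Z) ^ 2) =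
      fp y x Z * Real.sqrt (1 - Rp x w Z ^ 2) - Rp y w ((ℝ ∙ x) ⊔ Z) * Rp x w Z := by
  have hYw := resid_sup_span' Z w hw y
  have hXw := resid_sup_span' Z w hw x
  have hYx := resid_sup_span' Z x hx y
  have hWx := resid_sup_span' Z x hx w
  -- nonvanishing of intermediate residuals
  haveI iAssoc : CompleteSpace ↥((ℝ ∙ x) ⊔ ((ℝ ∙ w) ⊔ Z)) := by
    rw [← sup_assoc]; infer_instance
  have hy3' : resid ((ℝ ∙ x) ⊔ ((ℝ ∙ w) ⊔ Z)) y ≠ 0 := by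
    rw [← resid_congr' (sup_assoc (a := (ℝ ∙ x)) (b := (ℝ ∙ w)) (c := Z)) y]
    exact hy3
  have hy1 : resid ((ℝ ∙ w) ⊔ Z) y ≠ 0 := resid_ne_zero_of_le' le_sup_right hy3'
  haveI : CompleteSpace ↥((ℝ ∙ w) ⊔ ((ℝ ∙ x) ⊔ Z)) := by
    rw [sup_left_comm]; infer_instance
  have hy2 : resid ((ℝ ∙ x) ⊔ Z) y ≠ 0 := by
    have h4 : resid ((ℝ ∙ w) ⊔ ((ℝ ∙ x) ⊔ Z)) y ≠ 0 := by
      rw [resid_congr' (sup_left_comm (ℝ ∙ w) (ℝ ∙ x) Z) y]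
      exact hy3'
    exact resid_ne_zero_of_le' le_sup_right h4
  -- strict Cauchy–Schwarz inequalities
  have S1 : ⟪resid Z y, resid Z x⟫^2 < ‖resid Z y‖^2 * ‖resid Z x‖^2 :=
    cs_strict' _ _ hx (by rw [← hYx]; exact hy2)
  have S2 : ⟪resid Z x, resid Z w⟫^2 < ‖resid Z x‖^2 * ‖resid Z w‖^2 :=
    cs_strict' _ _ hw (by rw [← hXw]; exact hx2)
  have S4 : ⟪resid Z y, resid Z w⟫^2 < ‖resid Z y‖^2 * ‖resid Z w‖^2 :=
    cs_strict' _ _ hw (by rw [← hYw]; exact hy1)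
  have S3 : ⟪resid ((ℝ ∙ w) ⊔ Z) y, resid ((ℝ ∙ w) ⊔ Z) x⟫^2 <
      ‖resid ((ℝ ∙ w) ⊔ Z) y‖^2 * ‖resid ((ℝ ∙ w) ⊔ Z) x‖^2 :=
    cs_strict' _ _ hx2 (by rw [← resid_sup_span' ((ℝ ∙ w) ⊔ Z) x hx2 y]; exact hy3')
  rw [hYw, hXw, inner_sub_proj' _ _ _ hw,
    normsq_sub_proj' (resid Z y) (resid Z w) hw,
    normsq_sub_proj' (resid Z x) (resid Z w) hw] at S3
  -- conversions of the partial R-values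
  have hRP1 : Rp y x ((ℝ ∙ w) ⊔ Z) =
      (⟪resid Z y, resid Z x⟫ - ⟪resid Z y, resid Z w⟫*⟪resid Z x, resid Z w⟫/‖resid Z w‖^2) /
        (Real.sqrt (‖resid Z y‖^2 - ⟪resid Z y, resid Z w⟫^2/‖resid Z w‖^2) *
         Real.sqrt (‖resid Z x‖^2 - ⟪resid Z x, resid Z w⟫^2/‖resid Z w‖^2)) := by
    rw [Rp, hYw, hXw, inner_sub_proj' _ _ _ hw,
      norm_sub_proj' (resid Z y) (resid Z w) hw,
      norm_sub_proj' (resid Z x) (resid Z w) hw]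
  have hRP2 : Rp y w ((ℝ ∙ x) ⊔ Z) =
      (⟪resid Z y, resid Z w⟫ - ⟪resid Z y, resid Z x⟫*⟪resid Z x, resid Z w⟫/‖resid Z x‖^2) /
        (Real.sqrt (‖resid Z y‖^2 - ⟪resid Z y, resid Z x⟫^2/‖resid Z x‖^2) *
         Real.sqrt (‖resid Z w‖^2 - ⟪resid Z x, resid Z w⟫^2/‖resid Z x‖^2)) := by
    rw [Rp, hYx, hWx, inner_sub_proj' _ _ _ hx,
      norm_sub_proj' (resid Z y) (resid Z x) hx,
      norm_sub_proj' (resid Z w) (resid Z x) hx,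
      real_inner_comm (resid Z w) (resid Z x)]
  have hRP3 : Rp y x Z = ⟪resid Z y, resid Z x⟫ / (‖resid Z y‖ * ‖resid Z x‖) := rfl
  have hRP4 : Rp x w Z = ⟪resid Z x, resid Z w⟫ / (‖resid Z x‖ * ‖resid Z w‖) := rfl
  rw [fp, fp, hRP1, hRP2, hRP3, hRP4]
  exact master_alg' ⟪resid Z y, resid Z x⟫ ⟪resid Z y, resid Z w⟫ ⟪resid Z x, resid Z w⟫
    ‖resid Z y‖ ‖resid Z x‖ ‖resid Z w‖
    (norm_pos_iff.2 hy) (norm_pos_iff.2 hx) (norm_pos_iff.2 hw) S1 S2 S4 S3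
end
end

section
/- Bias expansion for partially uncorrelated confounders (Lemma on independent expansion): let H be a real Hilbert space, W a complete subspace, and y, d, u_1, …, u_l ∈ H such that d^{⊥W} ≠ 0, each u_j^{⊥W} ≠ 0, ⟨u_i^{⊥W}, u_j^{⊥W}⟩ = 0 for all i ≠ j, and all residuals appearing below are nonzero. Let U := span{u_1, …, u_l} and U_{−j} := span{u_i : i ≠ j}. Then β_{y∼d|W} − β_{y∼d|W+U} = Σ_{j=1}^{l} β_{y∼u_j|W+span(d)+U_{−j}}·β_{u_j∼d|W}, where β_{a∼b|M} := ⟨a^{⊥M}, b^{⊥M}⟩/‖b^{⊥M}‖². -/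
/-!
R²-calculus in real Hilbert spaces (Freidling & Zhao, "Optimization-based
Sensitivity Analysis for Unmeasured Confounding using Partial Correlations").
-/

noncomputable section

open Submodule RealInnerProductSpace

variable {H : Type*} [NormedAddCommGroup H] [InnerProductSpace ℝ H]

lemma resid_eq_of {M : Submodule ℝ H} [HasOrthogonalProjection M] {x z : H}
    (h1 : x - z ∈ M) (h2 : z ∈ Mᗮ) : resid M x = z := by
  have h : (orthogonalProjection M x : H) = x - z :=
    eq_starProjection_of_mem_orthogonal h1 (by simpa using h2)
  simp [resid, h]

lemma resid_sup_span {W M : Submodule ℝ H} [HasOrthogonalProjection M] {S : Set H}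
    (hM : M = W ⊔ Submodule.span ℝ S) {x z : H}
    (h1 : x - z ∈ M) (h2 : z ∈ Wᗮ) (h3 : ∀ s ∈ S, ⟪s, z⟫ = 0) :
    resid M x = z := by
  refine resid_eq_of h1 ?_
  rw [hM, Submodule.mem_orthogonal]
  intro m hm
  have hspan : ∀ s' ∈ Submodule.span ℝ S, ⟪s', z⟫ = 0 := by
    intro s' hs'
    induction hs' using Submodule.span_induction with
    | mem a ha => exact h3 a ha
    | zero => simp
    | add a b _ _ ha hb => rw [inner_add_left, ha, hb, add_zero]
    | smul r a _ ha => rw [real_inner_smul_left, ha, mul_zero]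
  obtain ⟨w, hw, s, hs, rfl⟩ := Submodule.mem_sup.1 hm
  have hwz : ⟪w, z⟫ = 0 := (Submodule.mem_orthogonal W z).1 h2 w hw
  rw [inner_add_left, hwz, hspan s hs, add_zero]

lemma resid_sub_mem (M : Submodule ℝ H) [HasOrthogonalProjection M] (x : H) :
    x - resid M x ∈ M := by simp [resid]

lemma resid_mem_orthogonal (M : Submodule ℝ H) [HasOrthogonalProjection M] (x : H) :
    resid M x ∈ Mᗮ := sub_starProjection_mem_orthogonal x

/-- bias expansion for partially uncorrelated confounders. -/
theorem independent_expansion [CompleteSpace H]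
    (W : Submodule ℝ H) [CompleteSpace W] {l : ℕ} (y d : H) (u : Fin l → H)
    [CompleteSpace ↥(W ⊔ Submodule.span ℝ (Set.range u))]
    [∀ j : Fin l, CompleteSpace ↥(W ⊔ (ℝ ∙ d) ⊔ Submodule.span ℝ (u '' {i | i ≠ j}))]
    (hd : resid W d ≠ 0) (hu : ∀ j, resid W (u j) ≠ 0)
    (horth : ∀ i j, i ≠ j → ⟪resid W (u i), resid W (u j)⟫ = 0)
    (hd2 : resid (W ⊔ Submodule.span ℝ (Set.range u)) d ≠ 0)
    (hu2 : ∀ j, resid (W ⊔ (ℝ ∙ d) ⊔ Submodule.span ℝ (u '' {i | i ≠ j})) (u j) ≠ 0) :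
    betaReg y d W - betaReg y d (W ⊔ Submodule.span ℝ (Set.range u)) =
      ∑ j : Fin l,
        betaReg y (u j) (W ⊔ (ℝ ∙ d) ⊔ Submodule.span ℝ (u '' {i | i ≠ j})) *
          betaReg (u j) d W := by
  classical
  set ty := resid W y with hty
  set td := resid W d with htd
  set tu : Fin l → H := fun j => resid W (u j) with htu
  set p : Fin l → ℝ := fun j => ‖tu j‖ ^ 2 with hp
  set e : Fin l → ℝ := fun j => ⟪td, tu j⟫ / p j with he
  set c : Fin l → ℝ := fun j => ⟪ty, tu j⟫ / p j with hc
  have hpne : ∀ j, p j ≠ 0 := fun j => pow_ne_zero 2 (norm_ne_zero_iff.2 (hu j))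
  have hitd : ∀ j, ⟪td, tu j⟫ = e j * p j := fun j => (div_mul_cancel₀ _ (hpne j)).symm
  have hity : ∀ j, ⟪ty, tu j⟫ = c j * p j := fun j => (div_mul_cancel₀ _ (hpne j)).symm
  have hitu : ∀ j, ⟪tu j, tu j⟫ = p j := fun j => real_inner_self_eq_norm_sq _
  have htyW : ty ∈ Wᗮ := resid_mem_orthogonal W y
  have htdW : td ∈ Wᗮ := resid_mem_orthogonal W d
  have htuW : ∀ j, tu j ∈ Wᗮ := fun j => resid_mem_orthogonal W (u j)
  have hinner_W : ∀ z, z ∈ Wᗮ → ∀ x : H, ⟪x, z⟫ = ⟪resid W x, z⟫ := by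
    intro z hz x
    have h0 : ⟪x - resid W x, z⟫ = 0 :=
      (Submodule.mem_orthogonal W z).1 hz _ (resid_sub_mem W x)
    rw [inner_sub_left] at h0
    linarith
  -- the residual vectors after additionally projecting off the u's
  set rd := td - ∑ j, e j • tu j with hrdDef
  set ry := ty - ∑ j, c j • tu j with hryDef
  have hrdtu : ∀ j, ⟪rd, tu j⟫ = 0 := by
    intro j
    have hs : ∑ i, ⟪e i • tu i, tu j⟫ = e j * p j := by
      rw [Finset.sum_eq_single j (fun i _ hij => by
          rw [real_inner_smul_left, horth i j hij, mul_zero]) (by simp)]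
      rw [real_inner_smul_left, hitu]
    rw [hrdDef, inner_sub_left, sum_inner, hitd, hs, sub_self]
  have hrytu : ∀ j, ⟪ry, tu j⟫ = 0 := by
    intro j
    have hs : ∑ i, ⟪c i • tu i, tu j⟫ = c j * p j := by
      rw [Finset.sum_eq_single j (fun i _ hij => by
          rw [real_inner_smul_left, horth i j hij, mul_zero]) (by simp)]
      rw [real_inner_smul_left, hitu]
    rw [hryDef, inner_sub_left, sum_inner, hity, hs, sub_self]
  have htu_rd : ∀ j, ⟪tu j, rd⟫ = 0 := fun j => by rw [real_inner_comm]; exact hrdtu j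
  have htu_ry : ∀ j, ⟪tu j, ry⟫ = 0 := fun j => by rw [real_inner_comm]; exact hrytu j
  set q := ‖rd‖ ^ 2 with hqDef
  set B := ⟪ry, rd⟫ with hBDef
  have hrr : ⟪rd, rd⟫ = q := real_inner_self_eq_norm_sq rd
  have htd2 : td = rd + ∑ j, e j • tu j := by rw [hrdDef]; abel
  have hty2 : ty = ry + ∑ j, c j • tu j := by rw [hryDef]; abel
  have htyrd : ⟪ty, rd⟫ = B := by
    rw [hty2, inner_add_left, sum_inner, Finset.sum_eq_zero (fun j _ => by
      rw [real_inner_smul_left, htu_rd, mul_zero]), add_zero, hBDef]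
  have htdrd : ⟪td, rd⟫ = q := by
    rw [htd2, inner_add_left, sum_inner, Finset.sum_eq_zero (fun j _ => by
      rw [real_inner_smul_left, htu_rd, mul_zero]), add_zero, hrr]
  have hrdW : rd ∈ Wᗮ :=
    Submodule.sub_mem _ htdW (Submodule.sum_mem _ fun j _ => Submodule.smul_mem _ _ (htuW j))
  have hryW : ry ∈ Wᗮ :=
    Submodule.sub_mem _ htyW (Submodule.sum_mem _ fun j _ => Submodule.smul_mem _ _ (htuW j))
  have htuT : ∀ j, tu j ∈ W ⊔ Submodule.span ℝ (Set.range u) := by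
    intro j
    have h2 : tu j = u j - (u j - tu j) := by abel
    rw [h2]
    exact Submodule.sub_mem _
      (Submodule.mem_sup_right (Submodule.subset_span ⟨j, rfl⟩))
      (Submodule.mem_sup_left (resid_sub_mem W (u j)))
  -- residuals onto W ⊔ span(range u)
  have hrdT : resid (W ⊔ Submodule.span ℝ (Set.range u)) d = rd := by
    refine resid_sup_span rfl ?_ ?_ ?_
    · have h1 : d - rd = (d - td) + ∑ j, e j • tu j := by rw [hrdDef]; abel
      rw [h1]
      exact Submodule.add_mem _ (Submodule.mem_sup_left (resid_sub_mem W d))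
        (Submodule.sum_mem _ fun j _ => Submodule.smul_mem _ _ (htuT j))
    · exact hrdW
    · rintro s ⟨j, rfl⟩
      rw [hinner_W rd hrdW (u j)]
      exact htu_rd j
  have hryT : resid (W ⊔ Submodule.span ℝ (Set.range u)) y = ry := by
    refine resid_sup_span rfl ?_ ?_ ?_
    · have h1 : y - ry = (y - ty) + ∑ j, c j • tu j := by rw [hryDef]; abel
      rw [h1]
      exact Submodule.add_mem _ (Submodule.mem_sup_left (resid_sub_mem W y))
        (Submodule.sum_mem _ fun j _ => Submodule.smul_mem _ _ (htuT j))
    · exact hryW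
    · rintro s ⟨j, rfl⟩
      rw [hinner_W ry hryW (u j)]
      exact htu_ry j
  have hrdne : rd ≠ 0 := by rw [← hrdT]; exact hd2
  have hq0 : 0 < q := by rw [hqDef]; exact pow_pos (norm_pos_iff.2 hrdne) 2
  have hqne : q ≠ 0 := ne_of_gt hq0
  have hpnn : ∀ j, 0 ≤ p j := fun j => by rw [hp]; positivity
  have hty_tui : ∀ i, ⟪tu i, ty⟫ = c i * p i := fun i => by rw [real_inner_comm]; exact hity i
  -- the per-j regression coefficients
  have hgamma : ∀ j, betaReg y (u j)
      (W ⊔ (ℝ ∙ d) ⊔ Submodule.span ℝ (u '' {i | i ≠ j})) = c j - e j * B / q := by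
    intro j
    have hMj : W ⊔ (ℝ ∙ d) ⊔ Submodule.span ℝ (u '' {i | i ≠ j})
        = W ⊔ Submodule.span ℝ ({d} ∪ u '' {i | i ≠ j}) := by
      rw [Submodule.span_union, ← sup_assoc]
    have hGpos : 0 < q + e j ^ 2 * p j :=
      add_pos_of_pos_of_nonneg hq0 (mul_nonneg (sq_nonneg _) (hpnn j))
    have hGne : q + e j ^ 2 * p j ≠ 0 := ne_of_gt hGpos
    set g := rd + e j • tu j with hgDef
    have hsplit : ∑ i, e i • tu i = e j • tu j + ∑ i ∈ Finset.univ.erase j, e i • tu i :=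
      (Finset.add_sum_erase _ _ (Finset.mem_univ j)).symm
    have hg_eq : g = td - ∑ i ∈ Finset.univ.erase j, e i • tu i := by
      rw [hgDef, hrdDef, hsplit]; abel
    have htd_g : td = g + ∑ i ∈ Finset.univ.erase j, e i • tu i := by rw [hg_eq]; abel
    have hgW : g ∈ Wᗮ := Submodule.add_mem _ hrdW (Submodule.smul_mem _ _ (htuW j))
    have hgg : ⟪g, g⟫ = q + e j ^ 2 * p j := by
      simp only [hgDef, inner_add_left, inner_add_right, real_inner_smul_left,
        real_inner_smul_right, hrr, hrdtu, htu_rd, hitu]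
      ring
    have htyg : ⟪ty, g⟫ = B + e j * (c j * p j) := by
      rw [hgDef, inner_add_right, real_inner_smul_right, htyrd, hity]
    have hgty : ⟪g, ty⟫ = B + e j * (c j * p j) := by rw [real_inner_comm]; exact htyg
    have htug : ⟪tu j, g⟫ = e j * p j := by
      rw [hgDef, inner_add_right, real_inner_smul_right, htu_rd, hitu, zero_add]
    have hgtu : ⟪g, tu j⟫ = e j * p j := by rw [real_inner_comm]; exact htug
    have htuig : ∀ i, i ≠ j → ⟪tu i, g⟫ = 0 := fun i hij => by
      rw [hgDef, inner_add_right, real_inner_smul_right, htu_rd, horth i j hij, mul_zero, add_zero]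
    have hgtui : ∀ i, i ≠ j → ⟪g, tu i⟫ = 0 := fun i hij => by
      rw [real_inner_comm]; exact htuig i hij
    -- the sum part of the y-residual
    set sj := ∑ i ∈ Finset.univ.erase j, c i • tu i with hsjDef
    have hsjW : sj ∈ Wᗮ :=
      Submodule.sum_mem _ fun i _ => Submodule.smul_mem _ _ (htuW i)
    have hsjtu : ⟪sj, tu j⟫ = 0 := by
      rw [hsjDef, sum_inner]
      exact Finset.sum_eq_zero fun i hi => by
        rw [real_inner_smul_left, horth i j (Finset.mem_erase.1 hi).1, mul_zero]
    have hsjg : ⟪sj, g⟫ = 0 := by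
      rw [hsjDef, sum_inner]
      exact Finset.sum_eq_zero fun i hi => by
        rw [real_inner_smul_left, htuig i (Finset.mem_erase.1 hi).1, mul_zero]
    have hgsj : ⟪g, sj⟫ = 0 := by rw [real_inner_comm]; exact hsjg
    have htu_sj : ∀ i, i ≠ j → ⟪tu i, sj⟫ = c i * p i := by
      intro i hij
      rw [hsjDef, inner_sum]
      rw [Finset.sum_eq_single_of_mem i (Finset.mem_erase.2 ⟨hij, Finset.mem_univ i⟩)
        (fun i' _ hne => by
          rw [real_inner_smul_right, horth i i' (Ne.symm hne), mul_zero])]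
      rw [real_inner_smul_right, hitu]
    -- generic generator-orthogonality helper
    have hgen : ∀ z : H, z ∈ Wᗮ → ⟪g, z⟫ = 0 → (∀ i, i ≠ j → ⟪tu i, z⟫ = 0) →
        ∀ s ∈ ({d} ∪ u '' {i | i ≠ j} : Set H), ⟪s, z⟫ = 0 := by
      intro z hzW hzg hztu s hs
      rcases hs with hs | ⟨i, hij, rfl⟩
      · rw [Set.mem_singleton_iff] at hs; rw [hs]
        rw [hinner_W z hzW d, ← htd, htd_g, inner_add_left, sum_inner, hzg, zero_add]
        exact Finset.sum_eq_zero fun i hi => by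
          rw [real_inner_smul_left, hztu i (Finset.mem_erase.1 hi).1, mul_zero]
      · rw [hinner_W z hzW (u i)]
        exact hztu i hij
    -- membership helpers in the j-th module
    have hdN : d ∈ W ⊔ Submodule.span ℝ ({d} ∪ u '' {i | i ≠ j}) :=
      Submodule.mem_sup_right (Submodule.subset_span (Set.mem_union_left _ rfl))
    have htdN : td ∈ W ⊔ Submodule.span ℝ ({d} ∪ u '' {i | i ≠ j}) := by
      have h2 : td = d - (d - td) := by abel
      rw [h2]
      exact Submodule.sub_mem _ hdN (Submodule.mem_sup_left (resid_sub_mem W d))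
    have htuN : ∀ i, i ≠ j → tu i ∈ W ⊔ Submodule.span ℝ ({d} ∪ u '' {i | i ≠ j}) := by
      intro i hij
      have h2 : tu i = u i - (u i - tu i) := by abel
      rw [h2]
      exact Submodule.sub_mem _
        (Submodule.mem_sup_right (Submodule.subset_span (Set.mem_union_right _ ⟨i, hij, rfl⟩)))
        (Submodule.mem_sup_left (resid_sub_mem W (u i)))
    have hgN : g ∈ W ⊔ Submodule.span ℝ ({d} ∪ u '' {i | i ≠ j}) := by
      rw [hg_eq]
      exact Submodule.sub_mem _ htdN (Submodule.sum_mem _ fun i hi =>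
        Submodule.smul_mem _ _ (htuN i (Finset.mem_erase.1 hi).1))
    -- residual of u j
    set zu := tu j - (e j * p j / (q + e j ^ 2 * p j)) • g with hzuDef
    have hzuW : zu ∈ Wᗮ := Submodule.sub_mem _ (htuW j) (Submodule.smul_mem _ _ hgW)
    have hzug : ⟪g, zu⟫ = 0 := by
      rw [hzuDef, inner_sub_right, real_inner_smul_right, hgtu, hgg,
        div_mul_cancel₀ _ hGne, sub_self]
    have hzutu : ∀ i, i ≠ j → ⟪tu i, zu⟫ = 0 := by
      intro i hij
      rw [hzuDef, inner_sub_right, real_inner_smul_right, horth i j hij, htuig i hij,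
        mul_zero, sub_zero]
    have hru : resid (W ⊔ (ℝ ∙ d) ⊔ Submodule.span ℝ (u '' {i | i ≠ j})) (u j) = zu := by
      refine resid_sup_span hMj ?_ hzuW (hgen zu hzuW hzug hzutu)
      rw [hMj]
      have h2 : u j - zu = (u j - tu j) + (e j * p j / (q + e j ^ 2 * p j)) • g := by
        rw [hzuDef]; abel
      rw [h2]
      exact Submodule.add_mem _ (Submodule.mem_sup_left (resid_sub_mem W (u j)))
        (Submodule.smul_mem _ _ hgN)
    -- residual of y
    set zy := ty - ((B + e j * (c j * p j)) / (q + e j ^ 2 * p j)) • g - sj with hzyDef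
    have hzyW : zy ∈ Wᗮ :=
      Submodule.sub_mem _ (Submodule.sub_mem _ htyW (Submodule.smul_mem _ _ hgW)) hsjW
    have hzyg : ⟪g, zy⟫ = 0 := by
      rw [hzyDef, inner_sub_right, inner_sub_right, real_inner_smul_right, hgty, hgg,
        div_mul_cancel₀ _ hGne, hgsj, sub_zero, sub_self]
    have hzytu : ∀ i, i ≠ j → ⟪tu i, zy⟫ = 0 := by
      intro i hij
      rw [hzyDef, inner_sub_right, inner_sub_right, real_inner_smul_right,
        htuig i hij, mul_zero, sub_zero, hty_tui, htu_sj i hij, sub_self]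
    have hry2 : resid (W ⊔ (ℝ ∙ d) ⊔ Submodule.span ℝ (u '' {i | i ≠ j})) y = zy := by
      refine resid_sup_span hMj ?_ hzyW (hgen zy hzyW hzyg hzytu)
      rw [hMj]
      have h2 : y - zy = (y - ty) + ((B + e j * (c j * p j)) / (q + e j ^ 2 * p j)) • g + sj := by
        rw [hzyDef]; abel
      rw [h2]
      refine Submodule.add_mem _ (Submodule.add_mem _
        (Submodule.mem_sup_left (resid_sub_mem W y)) (Submodule.smul_mem _ _ hgN)) ?_
      exact Submodule.sum_mem _ fun i hi =>
        Submodule.smul_mem _ _ (htuN i (Finset.mem_erase.1 hi).1)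
    -- now the scalar computation
    have hnum : ⟪zy, zu⟫ = p j * (c j * q - e j * B) / (q + e j ^ 2 * p j) := by
      rw [hzyDef, hzuDef]
      simp only [inner_sub_left, inner_sub_right, real_inner_smul_left, real_inner_smul_right,
        hity, htyg, hgtu, hgg, hsjtu, hsjg]
      field_simp [show q + p j * e j ^ 2 ≠ 0 by rw [mul_comm (p j)]; exact hGne]
      ring
    have hden : ‖zu‖ ^ 2 = p j * q / (q + e j ^ 2 * p j) := by
      rw [← real_inner_self_eq_norm_sq, hzuDef]
      simp only [inner_sub_left, inner_sub_right, real_inner_smul_left, real_inner_smul_right,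
        hitu, htug, hgtu, hgg]
      field_simp [show q + p j * e j ^ 2 ≠ 0 by rw [mul_comm (p j)]; exact hGne]
      ring
    unfold betaReg
    rw [hry2, hru, hnum, hden]
    clear_value p e c q B
    field_simp [hpne j, hqne, hGne, show q + p j * e j ^ 2 ≠ 0 by rw [mul_comm (p j)]; exact hGne]
  -- assemble
  have hbW : betaReg y d W = (B + ∑ j, e j * (c j * p j)) / ‖td‖ ^ 2 := by
    unfold betaReg
    have hnum : ⟪ty, td⟫ = B + ∑ j, e j * (c j * p j) := by
      rw [htd2, inner_add_right, inner_sum, htyrd]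
      congr 1
      exact Finset.sum_congr rfl fun i _ => by rw [real_inner_smul_right, hity]
    rw [← hty, ← htd, hnum]
  have hD : ‖td‖ ^ 2 = q + ∑ j, e j * (e j * p j) := by
    rw [← real_inner_self_eq_norm_sq]
    nth_rewrite 2 [htd2]
    rw [inner_add_right, inner_sum, htdrd]
    congr 1
    exact Finset.sum_congr rfl fun i _ => by rw [real_inner_smul_right, hitd]
  have hDne : ‖td‖ ^ 2 ≠ 0 := pow_ne_zero 2 (norm_ne_zero_iff.2 hd)
  have hQne : q + ∑ j, e j * (e j * p j) ≠ 0 := by rw [← hD]; exact hDne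
  have hbT : betaReg y d (W ⊔ Submodule.span ℝ (Set.range u)) = B / q := by
    unfold betaReg
    rw [hrdT, hryT, ← hBDef, ← hqDef]
  have hbu : ∀ j, betaReg (u j) d W = e j * p j / ‖td‖ ^ 2 := by
    intro j
    unfold betaReg
    rw [← htd]
    show ⟪tu j, td⟫ / ‖td‖ ^ 2 = _
    rw [real_inner_comm, hitd]
  have hsum : (∑ j : Fin l,
      betaReg y (u j) (W ⊔ (ℝ ∙ d) ⊔ Submodule.span ℝ (u '' {i | i ≠ j})) *
        betaReg (u j) d W)
      = ∑ j, (c j - e j * B / q) * (e j * p j / ‖td‖ ^ 2) :=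
    Finset.sum_congr rfl fun j _ => by rw [hgamma j, hbu j]
  rw [hbW, hbT, hsum, hD]
  have hsum2 : ∑ j, (c j - e j * B / q) * (e j * p j / (q + ∑ i, e i * (e i * p i)))
      = (q * (∑ j, e j * (c j * p j)) - B * (∑ j, e j * (e j * p j))) / q
          / (q + ∑ i, e i * (e i * p i)) := by
    rw [Finset.sum_congr rfl (fun j (_ : j ∈ Finset.univ) => show
      (c j - e j * B / q) * (e j * p j / (q + ∑ i, e i * (e i * p i)))
        = (q * (e j * (c j * p j)) - B * (e j * (e j * p j))) / q
            / (q + ∑ i, e i * (e i * p i)) by field_simp)]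
    rw [← Finset.sum_div, ← Finset.sum_div, Finset.sum_sub_distrib,
      ← Finset.mul_sum, ← Finset.mul_sum]
  rw [hsum2]
  field_simp [show q + ∑ x, e x ^ 2 * p x ≠ 0 by simp only [sq, mul_assoc]; exact hQne]
  ring
end
end
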